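/- Let p be a prime, a ≥ 1, and n = p^a. For any c : Fin n → ℤ, the determinant of the circulant matrix of c is congruent modulo p to the sum of the n-th powers of the entries: det(circulant c) ≡ (c 0)^n + (c 1)^n + ⋯ + (c (n−1))^n (mod p). -/

import Mathlib

open Matrix Polynomial Fin.NatCast

section Aux

variable {p n : ℕ} [Fact p.Prime] [NeZero n]

private lemma circ_single_pow (k : ℕ) :
    (circulant (Pi.single 1 1 : Fin n → ZMod p)) ^ k
      = circulant (Pi.single (k : Fin n) 1) := by
  induction k with
  | zero => simp
  | succ k ih =>
    rw [pow_succ, ih, circulant_mul]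
    ext i
    simp only [mulVec_single, MulOpposite.op_one, one_smul, col_apply, mul_one, circulant_apply]
    rw [Pi.single_apply, Pi.single_apply]
    congr 1
    push_cast
    simp [sub_eq_iff_eq_add]

omit [NeZero n] in
private lemma circulant_sum {ι : Type*} (s : Finset ι) (v : ι → Fin n → ZMod p) :
    circulant (∑ i ∈ s, v i) = ∑ i ∈ s, circulant (v i) := by
  ext i j
  simp [circulant_apply, Matrix.sum_apply]

private lemma circulant_det_eq {a : ℕ} (hn : n = p ^ a) (d : Fin n → ZMod p) :
    (circulant d).det = ∑ i, d i ^ n := by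
  subst hn
  set P : Matrix (Fin (p ^ a)) (Fin (p ^ a)) (ZMod p) := circulant (Pi.single 1 1) with hP
  have hPn : P ^ (p ^ a) = 1 := by
    rw [hP, circ_single_pow, Fin.natCast_self, circulant_single_one]
  set f : (ZMod p)[X] := ∑ i : Fin (p ^ a), C (d i) * X ^ (i : ℕ) with hf
  have hA : circulant d = aeval P f := by
    rw [hf, map_sum]
    have : ∀ i : Fin (p ^ a), aeval P (C (d i) * X ^ (i : ℕ)) = d i • P ^ (i : ℕ) := by
      intro i
      rw [_root_.map_mul, aeval_C, aeval_X_pow, Algebra.algebraMap_eq_smul_one,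
        smul_mul_assoc, one_mul]
    rw [Finset.sum_congr rfl fun i _ => this i]
    have h2 : ∀ i : Fin (p ^ a), d i • P ^ (i : ℕ) = circulant (Pi.single i (d i)) := by
      intro i
      rw [hP, circ_single_pow, Fin.cast_val_eq_self, ← circulant_smul]
      ext j k
      simp [circulant_apply, Pi.single_apply, smul_ite]
    rw [Finset.sum_congr rfl fun i _ => h2 i, ← circulant_sum, Finset.univ_sum_single]
  have hfp : f ^ (p ^ a) = ∑ i : Fin (p ^ a), C (d i ^ p ^ a) * X ^ ((i : ℕ) * p ^ a) := by
    rw [hf, sum_pow_char_pow]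
    refine Finset.sum_congr rfl fun i _ => ?_
    rw [mul_pow, ← pow_mul, ← C_pow]
  have hApow : circulant d ^ (p ^ a)
      = (∑ i, d i ^ p ^ a) • (1 : Matrix (Fin (p ^ a)) (Fin (p ^ a)) (ZMod p)) := by
    rw [hA, ← map_pow, hfp, map_sum, Finset.sum_smul]
    refine Finset.sum_congr rfl fun i _ => ?_
    rw [_root_.map_mul, aeval_C, aeval_X_pow, mul_comm (i : ℕ), pow_mul, hPn, one_pow,
      mul_one, Algebra.algebraMap_eq_smul_one]
  calc (circulant d).det
      = (circulant d).det ^ (p ^ a) := by rw [ZMod.pow_card_pow]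
    _ = ((circulant d) ^ (p ^ a)).det := (Matrix.det_pow _ _).symm
    _ = (∑ i, d i ^ p ^ a) ^ Fintype.card (Fin (p ^ a)) := by
          rw [hApow, Matrix.det_smul, Matrix.det_one, mul_one]
    _ = ∑ i, d i ^ p ^ a := by rw [Fintype.card_fin, ZMod.pow_card_pow]

end Aux

theorem circulant_det_modeq_sum_pow (p a : ℕ) (hp : p.Prime) (ha : 1 ≤ a)
    (n : ℕ) (hn : n = p ^ a) (c : Fin n → ℤ) :
    (Matrix.circulant c).det ≡ (∑ i, c i ^ n) [ZMOD (p : ℤ)] := by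
  haveI : Fact p.Prime := ⟨hp⟩
  haveI : NeZero n := ⟨hn ▸ pow_ne_zero a hp.pos.ne'⟩
  refine (ZMod.intCast_eq_intCast_iff _ _ _).mp ?_
  have h1 : (((Matrix.circulant c).det : ℤ) : ZMod p)
      = (Matrix.circulant (fun i => ((c i : ZMod p)))).det := by
    rw [← Matrix.map_circulant]
    exact (RingHom.map_det (Int.castRingHom (ZMod p)) _)
  rw [h1]
  push_cast
  exact circulant_det_eq hn _
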